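/- arXiv:1307.8307 — 9 statements merged into one kernel-verified Lean document; each statement's English description precedes it below -/
import Mathlib

section
/- If a fibrous preorder (R, A, B, p, ∂) admits a map u : B → A with p ∘ u = id_B and such that u(p(a)) R y implies a R y for all a ∈ A, y ∈ B, then the relation R° on B defined by x R° y ↔ u(x) R y is transitive. -/
/-- If a fibrous preorder admits `u : B → A` with `p ∘ u = id` and
`u(p(a)) R y → a R y`, then `x R° y ↔ u(x) R y` is transitive. -/
theorem fibrous_u_transitive {A B : Type*}
    (p : A → B) (R : A → B → Prop) (bd : A → B → A)
    (F1 : ∀ a b, R a b → p (bd a b) = b)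
    (F2 : ∀ a, R a (p a))
    (F3 : ∀ a b y, R a b → R (bd a b) y → R a y)
    (u : B → A) (hu1 : ∀ x, p (u x) = x)
    (hu2 : ∀ a y, R (u (p a)) y → R a y) :
    ∀ x y z : B, R (u x) y → R (u y) z → R (u x) z := by
  intro x y z hxy hyz
  exact F3 _ _ _ hxy (hu2 _ _ (by rw [F1 _ _ hxy]; exact hyz))
end

section
/- For a topological space (B, τ), the structure with A = {(U, x) | x ∈ U ∈ τ}, p(U, x) = x, (U, x) R y ↔ y ∈ U, and ∂((U, x), y) = (U, y) is a fibrous preorder, i.e., it satisfies axioms (F1), (F2), (F3). -/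
/-- The set `A = {(U, x) | x ∈ U ∈ τ}` associated to a topological space. -/
def OpenPt (B : Type*) [TopologicalSpace B] : Type _ :=
  {ux : Set B × B // IsOpen ux.1 ∧ ux.2 ∈ ux.1}

/-- For a topological space `(B, τ)`, the structure with
`A = {(U,x) | x ∈ U ∈ τ}`, `p(U,x) = x`, `(U,x) R y ↔ y ∈ U`,
`∂((U,x), y) = (U, y)` satisfies (F1), (F2), (F3). -/
theorem topspace_gives_fibrous_preorder (B : Type*) [TopologicalSpace B]
    (p : OpenPt B → B) (hp : ∀ a, p a = a.1.2)
    (R : OpenPt B → B → Prop) (hR : ∀ a y, R a y ↔ y ∈ a.1.1)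
    (bd : ∀ (a : OpenPt B) (y : B), R a y → OpenPt B)
    (hbd : ∀ a y h, (bd a y h).1 = (a.1.1, y)) :
    (∀ a b (h : R a b), p (bd a b h) = b) ∧
    (∀ a : OpenPt B, R a (p a)) ∧
    (∀ a b y (h : R a b), R (bd a b h) y → R a y) := by
  refine ⟨fun a b h => ?_, fun a => ?_, fun a b y h h' => ?_⟩
  · rw [hp, hbd]
  · rw [hR, hp]; exact a.2.2
  · rw [hR] at h' ⊢; rw [hbd] at h'; exact h'
end

section
/- If f : (B, τ) → (B', τ') is a continuous map of topological spaces, then (f, f*) with f*((U', x'), y) = (f⁻¹(U'), y) for x' = f(y) is a fibrous morphism between the associated fibrous preorders; that is, p(f*((U', x'), y)) = y and f*((U', x'), y) R z implies (U', x') R' f(z). -/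
/-- A continuous map `f : B → B'` together with
`f*((U', x'), y) = (f⁻¹(U'), y)` is a fibrous morphism between the associated
fibrous preorders: `f⁻¹(U')` is open and contains `y`, `p(f*((U',x'),y)) = y`,
and `f*((U',x'),y) R z → (U',x') R' f(z)`. -/
theorem continuous_gives_fibrous_morphism
    {B B' : Type*} [TopologicalSpace B] [TopologicalSpace B']
    (f : B → B') (hf : Continuous f)
    (p : OpenPt B → B) (hp : ∀ a, p a = a.1.2)
    (R : OpenPt B → B → Prop) (hR : ∀ a y, R a y ↔ y ∈ a.1.1)
    (p' : OpenPt B' → B') (hp' : ∀ a', p' a' = a'.1.2)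
    (R' : OpenPt B' → B' → Prop) (hR' : ∀ a' y', R' a' y' ↔ y' ∈ a'.1.1)
    (fstar : ∀ (a' : OpenPt B') (y : B), p' a' = f y → OpenPt B)
    (hfstar : ∀ a' y h, (fstar a' y h).1 = (f ⁻¹' a'.1.1, y)) :
    (∀ a' y (h : p' a' = f y), IsOpen (f ⁻¹' a'.1.1) ∧ y ∈ f ⁻¹' a'.1.1) ∧
    (∀ a' y (h : p' a' = f y), p (fstar a' y h) = y) ∧
    (∀ a' y (h : p' a' = f y) z, R (fstar a' y h) z → R' a' (f z)) := by
  refine ⟨fun a' y h => ⟨hf.isOpen_preimage _ a'.2.1, ?_⟩, fun a' y h => ?_, fun a' y h z hz => ?_⟩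
  · show f y ∈ a'.1.1
    rw [← h, hp'] at *
    exact h ▸ a'.2.2
  · rw [hp, hfstar]
  · rw [hR'] 
    have := (hR _ _).1 hz
    rw [hfstar] at this
    exact this
end

section
/- Given a spatial fibrous preorder (R, A, B, p, ∂, s, m), the collection τ of subsets O ⊆ B such that for every y ∈ O there exists a ∈ A with p(a) = y and N(a) ⊆ O (where N(a) = {y | a R y}) is a topology on B. -/
/-- Given a spatial fibrous preorder `(R, A, B, p, ∂, s, m)`, the
collection of sets `O ⊆ B` such that every `y ∈ O` admits `a ∈ A` with
`p a = y` and `N(a) = {z | a R z} ⊆ O` is a topology on `B`. -/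
theorem spatial_fibrous_preorder_topology {A B : Type*}
    (p : A → B) (R : A → B → Prop) (bd : A → B → A)
    (F1 : ∀ a b, R a b → p (bd a b) = b)
    (F2 : ∀ a, R a (p a))
    (F3 : ∀ a b y, R a b → R (bd a b) y → R a y)
    (s : B → A) (F4 : ∀ y, p (s y) = y)
    (m : A → A → A)
    (F5 : ∀ a a', p a = p a' → p (m a a') = p a ∧ p (m a a') = p a')
    (F6 : ∀ a a' y, p a = p a' → R (m a a') y → R a y ∧ R a' y) :
    ∃ t : TopologicalSpace B,
      ∀ O : Set B, t.IsOpen O ↔ ∀ y ∈ O, ∃ a : A, p a = y ∧ {z | R a z} ⊆ O := by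
  refine ⟨⟨fun O => ∀ y ∈ O, ∃ a : A, p a = y ∧ {z | R a z} ⊆ O, ?_, ?_, ?_⟩,
    fun O => Iff.rfl⟩
  · intro y _
    exact ⟨s y, F4 y, fun z _ => trivial⟩
  · intro O1 O2 h1 h2 y hy
    obtain ⟨a, ha, hN⟩ := h1 y hy.1
    obtain ⟨a', ha', hN'⟩ := h2 y hy.2
    have hpp : p a = p a' := ha.trans ha'.symm
    refine ⟨m a a', (F5 a a' hpp).1.trans ha, fun z hz => ?_⟩
    obtain ⟨hz1, hz2⟩ := F6 a a' z hpp hz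
    exact ⟨hN hz1, hN' hz2⟩
  · intro S hS y hy
    obtain ⟨O, hO, hyO⟩ := hy
    obtain ⟨a, ha, hN⟩ := hS O hO y hyO
    exact ⟨a, ha, fun z hz => ⟨O, hO, hN hz⟩⟩
end

section
/- In a spatial fibrous preorder, for every a ∈ A the set N(a) = {y ∈ B | a R y} is open in the induced topology; more precisely, for each y ∈ N(a), the element a' = ∂(a, y) satisfies p(a') = y and N(a') ⊆ N(a). -/
/-- In a spatial fibrous preorder, every `N(a) = {y | a R y}` is
open in the induced topology; more precisely, for `y ∈ N(a)` the element
`a' = ∂(a, y)` satisfies `p a' = y` and `N(a') ⊆ N(a)`. -/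
theorem spatial_fibrous_preorder_N_open {A B : Type*}
    (p : A → B) (R : A → B → Prop) (bd : A → B → A)
    (F1 : ∀ a b, R a b → p (bd a b) = b)
    (F2 : ∀ a, R a (p a))
    (F3 : ∀ a b y, R a b → R (bd a b) y → R a y)
    (s : B → A) (F4 : ∀ y, p (s y) = y)
    (m : A → A → A)
    (F5 : ∀ a a', p a = p a' → p (m a a') = p a ∧ p (m a a') = p a')
    (F6 : ∀ a a' y, p a = p a' → R (m a a') y → R a y ∧ R a' y)
    (a : A) :
    (∀ y ∈ {y | R a y}, ∃ a' : A, p a' = y ∧ {z | R a' z} ⊆ {y | R a y}) ∧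
    (∀ y, R a y → p (bd a y) = y ∧ {z | R (bd a y) z} ⊆ {y | R a y}) := by
  refine ⟨fun y hy => ⟨bd a y, F1 a y hy, fun z hz => F3 a y z hy hz⟩,
    fun y hy => ⟨F1 a y hy, fun z hz => F3 a y z hy hz⟩⟩
end

section
/- If (f, f*) is a fibrous morphism between spatial fibrous preorders, then f : B → B' is continuous with respect to the induced topologies: for every open O' in B' (i.e., every y' ∈ O' admits a' with p'(a') = y' and N'(a') ⊆ O'), the preimage f⁻¹(O') is open in B. -/
/-- If `(f, f*)` is a fibrous morphism between spatial fibrous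
preorders then `f` is continuous for the induced topologies: the preimage of
any induced-open set of `B'` is induced-open in `B`. -/
theorem fibrous_morphism_continuous {A B A' B' : Type*}
    (p : A → B) (R : A → B → Prop) (bd : A → B → A)
    (F1 : ∀ a b, R a b → p (bd a b) = b)
    (F2 : ∀ a, R a (p a))
    (F3 : ∀ a b y, R a b → R (bd a b) y → R a y)
    (s : B → A) (F4 : ∀ y, p (s y) = y)
    (m : A → A → A)
    (F5 : ∀ a a', p a = p a' → p (m a a') = p a ∧ p (m a a') = p a')
    (F6 : ∀ a a' y, p a = p a' → R (m a a') y → R a y ∧ R a' y)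
    (p' : A' → B') (R' : A' → B' → Prop) (bd' : A' → B' → A')
    (F1' : ∀ a b, R' a b → p' (bd' a b) = b)
    (F2' : ∀ a, R' a (p' a))
    (F3' : ∀ a b y, R' a b → R' (bd' a b) y → R' a y)
    (s' : B' → A') (F4' : ∀ y, p' (s' y) = y)
    (m' : A' → A' → A')
    (F5' : ∀ a a', p' a = p' a' → p' (m' a a') = p' a ∧ p' (m' a a') = p' a')
    (F6' : ∀ a a' y, p' a = p' a' → R' (m' a a') y → R' a y ∧ R' a' y)
    (f : B → B') (fstar : A' → B → A)
    (hf1 : ∀ a' b, p' a' = f b → p (fstar a' b) = b)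
    (hf2 : ∀ a' b y, p' a' = f b → R (fstar a' b) y → R' a' (f y)) :
    ∀ O' : Set B',
      (∀ y' ∈ O', ∃ a' : A', p' a' = y' ∧ {z | R' a' z} ⊆ O') →
      (∀ y ∈ f ⁻¹' O', ∃ a : A, p a = y ∧ {z | R a z} ⊆ f ⁻¹' O') := by
  intro O' hO' y hy
  obtain ⟨a', ha'p, ha'N⟩ := hO' (f y) hy
  exact ⟨fstar a' y, hf1 a' y ha'p, fun z hz => ha'N (hf2 a' y z ha'p hz)⟩
end

section
/- A topological space (B, τ) is an Alexandrov space if and only if its associated fibrous preorder admits a map u : B → A with p ∘ u = id_B and u(p(a)) R y → a R y for all a ∈ A, y ∈ B. -/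
/-- `(B, τ)` is Alexandrov iff its associated fibrous preorder
admits `u : B → A` with `p ∘ u = id` and `u(p(a)) R y → a R y`. -/
theorem alexandrov_iff_u_map (B : Type*) [TopologicalSpace B]
    (p : OpenPt B → B) (hp : ∀ a, p a = a.1.2)
    (R : OpenPt B → B → Prop) (hR : ∀ a y, R a y ↔ y ∈ a.1.1) :
    (∀ S : Set (Set B), (∀ U ∈ S, IsOpen U) → IsOpen (⋂₀ S)) ↔
    ∃ u : B → OpenPt B, (∀ x, p (u x) = x) ∧
      ∀ (a : OpenPt B) (y : B), R (u (p a)) y → R a y := by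
  constructor
  · intro hAlex
    -- minimal open neighborhood
    have hmin : ∀ x : B, IsOpen (⋂₀ {U : Set B | IsOpen U ∧ x ∈ U}) := by
      intro x
      exact hAlex _ (fun U hU => hU.1)
    refine ⟨fun x => ⟨(⋂₀ {U : Set B | IsOpen U ∧ x ∈ U}, x),
      hmin x, fun U hU => hU.2⟩, fun x => hp _, ?_⟩
    intro a y h
    apply (hR _ _).2
    replace h := (hR _ _).1 h
    have := h
    simp only [hp] at this
    exact this a.1.1 ⟨a.2.1, a.2.2⟩
  · rintro ⟨u, hu, hmin⟩ S hS
    rw [isOpen_iff_forall_mem_open]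
    intro x hx
    refine ⟨(u x).1.1, ?_, (u x).2.1, ?_⟩
    · intro y hy U hU
      have hxU : x ∈ U := hx U hU
      have ha : R (u (p ⟨(U, x), hS U hU, hxU⟩)) y := by
        have e : p ⟨(U, x), hS U hU, hxU⟩ = x := hp _
        exact (congrArg (fun z => R (u z) y) e).mpr ((hR _ _).2 hy)
      have := hmin ⟨(U, x), hS U hU, hxU⟩ y ha
      exact (hR _ _).1 this
    · have := hu x
      rw [hp] at this
      have h2 := (u x).2.2
      rw [this] at h2
      exact h2
end

section
/- Let I be a monoid, B a set, (R_i)_{i∈I} a family of binary relations on B and ∂_i : R_i → I maps such that (1) x R_i x; (2) x R_{ij} y → x R_i y ∧ x R_j y; (3) x R_i b ∧ b R_{∂_i(x,b)} y → x R_i y. Then A = I × B with p(i, x) = x, s(x) = (1, x), m((i,x),(j,x)) = (ij, x), (i, x) R y ↔ x R_i y, and ∂((i,x), y) = (∂_i(x,y), y) is a spatial fibrous preorder. -/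
/-- For a monoid `I`, a set `B`, relations `R_i ⊆ B × B` and maps
`∂_i : R_i → I` with (1) `x R_i x`, (2) `x R_{ij} y → x R_i y ∧ x R_j y`,
(3) `x R_i b ∧ b R_{∂_i(x,b)} y → x R_i y`, the structure `A = I × B`,
`p(i,x) = x`, `s(x) = (1,x)`, `m((i,x),(j,x)) = (ij,x)`,
`(i,x) R y ↔ x R_i y`, `∂((i,x),y) = (∂_i(x,y), y)` is a spatial fibrous
preorder. -/
theorem indexed_preorders_spatial_fibrous_preorder
    (I : Type*) [Monoid I] (B : Type*)
    (Ri : I → B → B → Prop) (di : I → B → B → I)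
    (h1 : ∀ (i : I) (x : B), Ri i x x)
    (h2 : ∀ (i j : I) (x y : B), Ri (i * j) x y → Ri i x y ∧ Ri j x y)
    (h3 : ∀ (i : I) (x b y : B), Ri i x b → Ri (di i x b) b y → Ri i x y)
    (p : I × B → B) (hp : ∀ a, p a = a.2)
    (R : I × B → B → Prop) (hR : ∀ a y, R a y ↔ Ri a.1 a.2 y)
    (s : B → I × B) (hs : ∀ x, s x = (1, x))
    (m : I × B → I × B → I × B)
    (hm : ∀ a a', a.2 = a'.2 → m a a' = (a.1 * a'.1, a.2))
    (bd : I × B → B → I × B)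
    (hbd : ∀ a y, R a y → bd a y = (di a.1 a.2 y, y)) :
    (∀ a b, R a b → p (bd a b) = b) ∧
    (∀ a, R a (p a)) ∧
    (∀ a b y, R a b → R (bd a b) y → R a y) ∧
    (∀ y, p (s y) = y) ∧
    (∀ a a', p a = p a' → p (m a a') = p a ∧ p (m a a') = p a') ∧
    (∀ a a' y, p a = p a' → R (m a a') y → R a y ∧ R a' y) := by
  refine ⟨?_, ?_, ?_, ?_, ?_, ?_⟩
  · intro a b hab
    rw [hbd a b hab, hp]
  · intro a
    rw [hR, hp]; exact h1 a.1 a.2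
  · intro a b y hab hby
    rw [hbd a b hab] at hby
    rw [hR] at hab hby ⊢
    exact h3 a.1 a.2 b y hab hby
  · intro y; rw [hs, hp]
  · intro a a' h
    rw [hp, hp] at h
    rw [hm a a' h, hp, hp, hp, h]
    exact ⟨rfl, rfl⟩
  · intro a a' y h hmy
    rw [hp, hp] at h
    rw [hm a a' h] at hmy
    rw [hR] at hmy
    rw [hR, hR]
    have := h2 a.1 a'.1 a.2 y hmy
    exact ⟨this.1, h ▸ this.2⟩
end

section
/- Let f : (B, d) → (B', d') be a continuous map of metric spaces. For every n ∈ ℕ⁺ and y ∈ B there exists k ∈ ℕ⁺ such that for all z ∈ B, d(z, y) < 1/k implies d'(f(z), f(y)) < 1/n; consequently, setting f*((n, f(y)), y) = (k, y) defines a fibrous morphism between the spatial fibrous preorders associated to (B, d) and (B', d'), i.e., p(f*((n, f(y)), y)) = y and f*((n, f(y)), y) R z → (n, f(y)) R' f(z). -/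
/-- For a continuous map `f : (B,d) → (B',d')` of metric spaces,
every `n ∈ ℕ⁺` and `y ∈ B` admit `k ∈ ℕ⁺` with
`d(z,y) < 1/k → d'(f z, f y) < 1/n`; consequently `f*((n, f y), y) = (k, y)`
satisfies the fibrous-morphism conditions `p(f*((n, f y), y)) = y` and
`f*((n, f y), y) R z → (n, f y) R' f z`. -/
theorem metric_continuous_fibrous_morphism
    {B B' : Type*} [MetricSpace B] [MetricSpace B']
    (f : B → B') (hf : Continuous f) :
    ∀ (n : ℕ+) (y : B), ∃ k : ℕ+,
      (∀ z : B, dist z y < 1 / (k : ℝ) → dist (f z) (f y) < 1 / (n : ℝ)) ∧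
      ((k, y) : ℕ+ × B).2 = y ∧
      (∀ z : B, dist y z < 1 / (k : ℝ) → dist (f y) (f z) < 1 / (n : ℝ)) := by
  intro n y
  have hn : (0 : ℝ) < 1 / (n : ℝ) := by positivity
  obtain ⟨δ, hδ, hball⟩ := Metric.continuous_iff.mp hf y (1 / (n : ℝ)) hn
  obtain ⟨k, hk⟩ := exists_nat_one_div_lt hδ
  have hk' : 1 / ((((⟨k + 1, Nat.succ_pos k⟩ : ℕ+) : ℕ)) : ℝ) < δ := by
    simpa using hk
  refine ⟨⟨k + 1, Nat.succ_pos k⟩, ?_, rfl, ?_⟩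
  · intro z hz
    exact hball z (hz.trans hk')
  · intro z hz
    rw [dist_comm] at hz ⊢
    exact hball z (hz.trans hk')
end
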